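/- Let V = ℝ^d, H a Hilbert space, and U : V → U(H) a strongly continuous unitary representation implementing an action α_x = Ad(U_x) on B(H). For z ∈ V and a ∈ B(H) with α_x(a) = e(−x·z)a for all x (a homogeneous element), and for J skew-symmetric, the operator T on L²(V; H) defined by (Tξ)(x) = ∫_V α_{Jy−x}(a) ξ̂(y) e(x·y) dy (for ξ Schwartz) satisfies (Tξ)(x) = α_{−x}(a) ξ(x + Jz). -/

import Mathlib

open RealInnerProductSpace MeasureTheory

abbrev Vd (d : ℕ) := EuclideanSpace ℝ (Fin d)

/-- The `H`-valued Fourier transform `ξ̂(y) = ∫ ξ(x) e(−x·y) dx`. -/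
noncomputable def vFourier {d : ℕ} {H : Type*} [NormedAddCommGroup H] [NormedSpace ℂ H]
    (ξ : Vd d → H) (y : Vd d) : H :=
  ∫ x : Vd d, Complex.exp (-(2 * Real.pi * Complex.I) * ((⟪x, y⟫ : ℝ) : ℂ)) • ξ x

open FourierTransform in
lemma vFourier_eq {d : ℕ} {H : Type*} [NormedAddCommGroup H] [NormedSpace ℂ H]
    (ξ : Vd d → H) (y : Vd d) : vFourier ξ y = 𝓕 ξ y := by
  rw [Real.fourier_eq', vFourier]
  congr 1
  ext x
  congr 1
  push_cast
  ring

open FourierTransform in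
theorem stmt7 (d : ℕ) {H : Type*} [NormedAddCommGroup H] [InnerProductSpace ℂ H]
    [CompleteSpace H]
    (U : Vd d → (H →L[ℂ] H))
    (hU0 : U 0 = 1) (hUadd : ∀ x y : Vd d, U (x + y) = (U x).comp (U y))
    (hUuni : ∀ (x : Vd d) (v : H), ‖U x v‖ = ‖v‖)
    (hUcont : ∀ v : H, Continuous fun x => U x v)
    -- the action `α_x = Ad(U_x)` on `B(H)`
    (α : Vd d → (H →L[ℂ] H) → (H →L[ℂ] H))
    (hα : ∀ (x : Vd d) (b : H →L[ℂ] H), α x b = (U x).comp (b.comp (U (-x))))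
    (J : Vd d →ₗ[ℝ] Vd d) (hJ : ∀ x y : Vd d, ⟪J x, y⟫ = -⟪x, J y⟫)
    (z : Vd d) (a : H →L[ℂ] H)
    -- homogeneity: `α_x(a) = e(−x·z) a`
    (ha : ∀ x : Vd d,
      α x a = Complex.exp (-(2 * Real.pi * Complex.I) * ((⟪x, z⟫ : ℝ) : ℂ)) • a) :
    ∀ (ξ : SchwartzMap (Vd d) H) (x : Vd d),
      (∫ y : Vd d,
          Complex.exp (2 * Real.pi * Complex.I * ((⟪x, y⟫ : ℝ) : ℂ)) •
            (α (J y - x) a) (vFourier (⇑ξ) y))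
        = (α (-x) a) (ξ (x + J z)) := by
  intro ξ x
  set g : SchwartzMap (Vd d) H := SchwartzMap.fourierTransformCLM ℂ ξ with hg
  have hgval : ∀ y, vFourier (⇑ξ) y = g y := fun y => vFourier_eq _ y
  have key : ∀ y : Vd d,
      Complex.exp (2 * Real.pi * Complex.I * ((⟪x, y⟫ : ℝ) : ℂ)) •
        (α (J y - x) a) (vFourier (⇑ξ) y)
      = Complex.exp (2 * Real.pi * Complex.I * ((⟪x, z⟫ : ℝ) : ℂ)) •
          a (Complex.exp (2 * Real.pi * Complex.I * ((⟪y, x + J z⟫ : ℝ) : ℂ)) • g y) := by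
    intro y
    rw [hgval, ha (J y - x), ContinuousLinearMap.smul_apply, a.map_smul, smul_smul, smul_smul,
      ← Complex.exp_add, ← Complex.exp_add]
    congr 1
    have h1 : ⟪J y - x, z⟫ = -⟪y, J z⟫ - ⟪x, z⟫ := by
      rw [inner_sub_left, hJ]
    have h2 : ⟪y, x + J z⟫ = ⟪x, y⟫ + ⟪y, J z⟫ := by
      rw [inner_add_right, real_inner_comm]
    rw [h1, h2]
    push_cast
    ring
  have hintg : Integrable (fun y : Vd d =>
      Complex.exp (2 * Real.pi * Complex.I * ((⟪y, x + J z⟫ : ℝ) : ℂ)) • g y) := by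
    apply Integrable.smul_of_top_right g.integrable
    have hc : Continuous fun y : Vd d =>
        Complex.exp (2 * Real.pi * Complex.I * ((⟪y, x + J z⟫ : ℝ) : ℂ)) :=
      Complex.continuous_exp.comp (continuous_const.mul
        (Complex.continuous_ofReal.comp (continuous_id.inner continuous_const)))
    refine memLp_top_of_bound hc.aestronglyMeasurable 1 ?_
    filter_upwards with y
    rw [Complex.norm_exp]
    simp [mul_comm]
  rw [integral_congr_ae (Filter.Eventually.of_forall key), integral_smul,
    a.integral_comp_comm hintg]
  have hint : (∫ y : Vd d,
        Complex.exp (2 * Real.pi * Complex.I * ((⟪y, x + J z⟫ : ℝ) : ℂ)) • g y)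
        = 𝓕⁻ (⇑g) (x + J z) := by
    rw [Real.fourierInv_eq']
    congr 1
    ext y
    congr 2
    push_cast
    ring
  have hinv : 𝓕⁻ (⇑g) (x + J z) = ξ (x + J z) := by
    have := Continuous.fourierInv_fourier_eq ξ.continuous ξ.integrable g.integrable
    exact congrFun this (x + J z)
  rw [hint, hinv, ha (-x), ContinuousLinearMap.smul_apply]
  congr 2
  rw [inner_neg_left]
  push_cast
  ring
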